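/- Let D be an N×M real matrix that is a differentiation matrix of order of accuracy R ≥ 1 over distinct abscissas τ_1, …, τ_M (rows evaluated at τ_1, …, τ_N). Then min(N, R) ≤ rank(D) ≤ min(N, M − 1). -/

import Mathlib

open Polynomial

/-- `D` is a differentiation matrix of order of accuracy `R` over the abscissas `τ`,
with rows evaluated at the points `σ`: applying `D` to the samples of any polynomial
of degree at most `R` yields the samples of its derivative. -/
def IsDiffMatrixOn {N M : ℕ} (D : Matrix (Fin N) (Fin M) ℝ) (τ : Fin M → ℝ)
    (σ : Fin N → ℝ) (R : ℕ) : Prop :=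
  ∀ p : Polynomial ℝ, p.natDegree ≤ R → ∀ k : Fin N,
    ∑ i, D k i * p.eval (τ i) = (Polynomial.derivative p).eval (σ k)

/-- rank bounds for a differentiation matrix:
`min N R ≤ rank D ≤ min N (M - 1)`. -/
theorem diffMatrix_rank_bounds {N M : ℕ} (hNM : N ≤ M) (R : ℕ) (hR : 1 ≤ R)
    (τ : Fin M → ℝ) (hτ : Function.Injective τ)
    (D : Matrix (Fin N) (Fin M) ℝ)
    (hD : IsDiffMatrixOn D τ (fun k => τ (Fin.castLE hNM k)) R) :
    min N R ≤ D.rank ∧ D.rank ≤ min N (M - 1) := by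
  constructor
  · -- lower bound
    set m := min N R with hm
    have hmN : m ≤ N := min_le_left _ _
    have hmR : m ≤ R := min_le_right _ _
    set σ : Fin N → ℝ := fun k => τ (Fin.castLE hNM k) with hσ
    set B : Matrix (Fin M) (Fin m) ℝ := fun i j => τ i ^ ((j : ℕ) + 1) with hB
    have hE : ∀ k j, (D * B) k j = (((j : ℕ) + 1 : ℕ) : ℝ) * σ k ^ (j : ℕ) := by
      intro k j
      have := hD (X ^ ((j : ℕ) + 1)) (by
        rw [natDegree_X_pow]; omega) k
      rw [Matrix.mul_apply]
      simpa [hB, derivative_X_pow] using this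
    set P : Matrix (Fin m) (Fin N) ℝ := fun j k => if Fin.castLE hmN j = k then 1 else 0
      with hP
    set u : Fin m → ℝ := fun j => σ (Fin.castLE hmN j) with hu
    set d : Fin m → ℝ := fun j => (((j : ℕ) + 1 : ℕ) : ℝ) with hd
    have key : P * (D * B) = Matrix.vandermonde u * Matrix.diagonal d := by
      ext j j'
      rw [Matrix.mul_diagonal, Matrix.mul_apply]
      rw [Finset.sum_eq_single (Fin.castLE hmN j)]
      · have h1 : P j (Fin.castLE hmN j) = 1 := if_pos rfl
        rw [h1, one_mul, hE]
        simp [hu, hd, Matrix.vandermonde, Matrix.of_apply, mul_comm]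
      · intro b _ hb
        have h0 : P j b = 0 := if_neg (fun h => hb h.symm)
        rw [h0, zero_mul]
      · simp
    have hdet : (Matrix.vandermonde u * Matrix.diagonal d).det ≠ 0 := by
      rw [Matrix.det_mul, Matrix.det_diagonal]
      apply mul_ne_zero
      · rw [Matrix.det_vandermonde_ne_zero_iff]
        intro a b hab
        exact Fin.castLE_injective hmN (Fin.castLE_injective hNM (hτ hab))
      · exact Finset.prod_ne_zero_iff.mpr fun j _ => by
          simp [hd]; positivity
    have hrank : (P * (D * B)).rank = m := by
      rw [key, Matrix.rank_of_isUnit _ ((Matrix.isUnit_iff_isUnit_det _).mpr hdet.isUnit),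
        Fintype.card_fin]
    calc m = (P * (D * B)).rank := hrank.symm
      _ ≤ (D * B).rank := Matrix.rank_mul_le_right _ _
      _ ≤ D.rank := Matrix.rank_mul_le_left _ _
  · -- upper bound
    refine le_min (Matrix.rank_le_height D) ?_
    rcases Nat.eq_zero_or_pos N with hN | hN
    · subst hN
      have : D.rank ≤ 0 := (Matrix.rank_le_height D)
      omega
    · have hM : 0 < M := lt_of_lt_of_le hN hNM
      have hone : D.mulVecLin (fun _ => (1 : ℝ)) = 0 := by
        funext k
        have := hD 1 (by simp) k
        simpa [Matrix.mulVecLin_apply, Matrix.mulVec, dotProduct] using this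
      have hker : 0 < Module.finrank ℝ (LinearMap.ker D.mulVecLin) := by
        rw [Module.finrank_pos_iff_exists_ne_zero]
        refine ⟨⟨fun _ => 1, hone⟩, ?_⟩
        intro h
        have h0 : (fun _ => (1:ℝ) : Fin M → ℝ) = 0 := congrArg Subtype.val h
        have := congrFun h0 ⟨0, hM⟩
        simpa using this
      have hsum := LinearMap.finrank_range_add_finrank_ker D.mulVecLin
      have hdom : Module.finrank ℝ (Fin M → ℝ) = M := by simp
      rw [hdom] at hsum
      have : D.rank = Module.finrank ℝ (LinearMap.range D.mulVecLin) := rfl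
      omega
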